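/- Let x = (x_1,…,x_R) be a vector of distinct real numbers and A = A(x). Let u ∈ ℂ^R be an eigenvector of A with eigenvalue iμ, μ ∈ ℝ (i.e. Au = iμu, u ≠ 0). Then for every 1 ≤ n ≤ R: μ²|u_n|² = Σ_{m ≠ n} a_{m,n}² · (|u_m|² + 2·Re(u_n · conj(u_m))). -/

import Mathlib

open Matrix

/-- The generalized Hilbert matrix `A(x)` with entries `a_{m,n} = 1/(x_m - x_n)`
for `m ≠ n` and `0` on the diagonal. -/
noncomputable def Amat {R : ℕ} (x : Fin R → ℝ) : Matrix (Fin R) (Fin R) ℝ :=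
  Matrix.of fun m n => if m = n then 0 else 1 / (x m - x n)

/-- If `u` is an eigenvector of `A(x)` for the eigenvalue `iμ`, then for every `n`,
`μ² |u_n|² = Σ_{m ≠ n} a_{m,n}² (|u_m|² + 2 Re(u_n conj(u_m)))`. -/
theorem eigenvector_identity_A {R : ℕ} (x : Fin R → ℝ)
    (hx : Function.Injective x) (μ : ℝ) (u : Fin R → ℂ) (hu : u ≠ 0)
    (h : ((Amat x).map (fun r => (r : ℂ))) *ᵥ u = (Complex.I * (μ : ℂ)) • u)
    (n : Fin R) :
    μ ^ 2 * ‖u n‖ ^ 2 =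
      ∑ m ∈ Finset.univ.erase n,
        (1 / (x m - x n)) ^ 2 *
          (‖u m‖ ^ 2 + 2 * (u n * (starRingEnd ℂ) (u m)).re) := by
  classical
  set S := Finset.univ.erase n with hS
  have hxne : ∀ {p q : Fin R}, p ≠ q → ((x p : ℂ) - x q) ≠ 0 := by
    intro p q hpq hz
    rw [sub_eq_zero] at hz
    exact hpq (hx (by exact_mod_cast hz))
  set b : Fin R → Fin R → ℂ := fun m k => if m = k then 0 else 1 / ((x m : ℂ) - x k)
    with hb
  have hbmm : ∀ m, b m m = 0 := fun m => by simp [hb]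
  have hba : ∀ p q : Fin R, b p q = - b q p := by
    intro p q
    by_cases hpq : p = q
    · simp [hpq, hbmm]
    · simp only [hb, if_neg hpq, if_neg (Ne.symm hpq)]
      rw [one_div, one_div, ← inv_neg, neg_sub]
  have hrow : ∀ k, ∑ m, b k m * u m = Complex.I * μ * u k := by
    intro k
    have hk := congrFun h k
    simp only [Matrix.mulVec, dotProduct, Pi.smul_apply, smul_eq_mul] at hk
    rw [← hk]
    apply Finset.sum_congr rfl
    intro m _
    congr 1
    simp only [Matrix.map_apply, Amat, Matrix.of_apply, hb]
    by_cases hkm : k = m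
    · simp [hkm]
    · simp only [if_neg hkm]
      push_cast
      ring
  have hrowc : ∀ k, ∑ m, b k m * (starRingEnd ℂ) (u m)
      = -(Complex.I * μ) * (starRingEnd ℂ) (u k) := by
    intro k
    have hkc := congrArg (starRingEnd ℂ) (hrow k)
    rw [map_sum] at hkc
    have hbconj : ∀ m, (starRingEnd ℂ) (b k m) = b k m := by
      intro m
      by_cases hkm : k = m
      · simp [hkm, hbmm]
      · simp only [hb, if_neg hkm, map_div₀, _root_.map_one, map_sub, Complex.conj_ofReal]
    calc ∑ m, b k m * (starRingEnd ℂ) (u m)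
        = ∑ m, (starRingEnd ℂ) (b k m * u m) := by
          refine Finset.sum_congr rfl fun m _ => ?_
          rw [_root_.map_mul, hbconj]
      _ = (starRingEnd ℂ) (Complex.I * ↑μ * u k) := hkc
      _ = -(Complex.I * ↑μ) * (starRingEnd ℂ) (u k) := by
          rw [_root_.map_mul, _root_.map_mul, Complex.conj_I, Complex.conj_ofReal]
          ring
  have hP : ∑ m ∈ S, b n m * u m = Complex.I * μ * u n := by
    rw [← hrow n]
    exact Finset.sum_erase _ (by simp [hbmm])
  have hQ : ∑ m ∈ S, b n m * (starRingEnd ℂ) (u m)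
      = -(Complex.I * μ) * (starRingEnd ℂ) (u n) := by
    rw [← hrowc n]
    exact Finset.sum_erase _ (by simp [hbmm])
  have hSrow : ∀ m ∈ S, ∑ m' ∈ S, b m m' * (starRingEnd ℂ) (u m')
      = -(Complex.I * μ) * (starRingEnd ℂ) (u m) + b n m * (starRingEnd ℂ) (u n) := by
    intro m hm
    rw [hS, Finset.sum_erase_eq_sub (Finset.mem_univ n), hrowc m, hba m n]
    ring
  have hScol : ∀ m' ∈ S, ∑ m ∈ S, b m m' * u m
      = -(Complex.I * μ) * u m' - b n m' * u n := by
    intro m' hm'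
    have e : ∑ m ∈ S, b m m' * u m = -∑ m ∈ S, b m' m * u m := by
      rw [← Finset.sum_neg_distrib]
      exact Finset.sum_congr rfl fun m _ => by rw [hba m m']; ring
    rw [e, hS, Finset.sum_erase_eq_sub (Finset.mem_univ n), hrow m', hba m' n]
    ring
  have hpf : ∀ m ∈ S, ∀ m' ∈ S, m ≠ m' →
      b n m * b n m' = b m m' * (b n m - b n m') := by
    intro m hm m' hm' hmm'
    have hnm : n ≠ m := (Finset.ne_of_mem_erase hm).symm
    have hnm' : n ≠ m' := (Finset.ne_of_mem_erase hm').symm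
    simp only [hb, if_neg hnm, if_neg hnm', if_neg hmm']
    have h1 := hxne hnm
    have h2 := hxne hnm'
    have h3 := hxne hmm'
    field_simp
    ring
  -- the key complex identity
  have key : ((μ : ℂ))^2 * (u n * (starRingEnd ℂ) (u n))
      = ∑ m ∈ S, (b n m)^2 *
          (u m * (starRingEnd ℂ) (u m)
            + (u m * (starRingEnd ℂ) (u n) + (starRingEnd ℂ) (u m) * u n)) := by
    have h0 : ((μ : ℂ))^2 * (u n * (starRingEnd ℂ) (u n))
        = (∑ m ∈ S, b n m * u m) * (∑ m ∈ S, b n m * (starRingEnd ℂ) (u m)) := by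
      rw [hP, hQ]
      linear_combination ((μ:ℂ))^2 * (u n * (starRingEnd ℂ) (u n)) * Complex.I_sq
    rw [h0, Finset.sum_mul_sum]
    have hsplit : ∀ m ∈ S,
        ∑ m' ∈ S, (b n m * u m) * (b n m' * (starRingEnd ℂ) (u m'))
        = (b n m)^2 * (u m * (starRingEnd ℂ) (u m))
          + ∑ m' ∈ S, b m m' * (b n m - b n m') * (u m * (starRingEnd ℂ) (u m')) := by
      intro m hm
      have inner : ∑ m' ∈ S,
          ((b n m * u m) * (b n m' * (starRingEnd ℂ) (u m'))
            - b m m' * (b n m - b n m') * (u m * (starRingEnd ℂ) (u m')))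
          = (b n m)^2 * (u m * (starRingEnd ℂ) (u m)) := by
        rw [Finset.sum_eq_single_of_mem m hm]
        · rw [hbmm]; ring
        · intro m' hm' hne
          have hh := hpf m hm m' hm' (Ne.symm hne)
          linear_combination (u m * (starRingEnd ℂ) (u m')) * hh
      rw [Finset.sum_sub_distrib] at inner
      linear_combination inner
    have hD : ∀ m ∈ S, ∑ m' ∈ S, b m m' * (b n m - b n m') * (u m * (starRingEnd ℂ) (u m'))
        = b n m * u m * (-(Complex.I * μ) * (starRingEnd ℂ) (u m) + b n m * (starRingEnd ℂ) (u n))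
          - ∑ m' ∈ S, b m m' * b n m' * (u m * (starRingEnd ℂ) (u m')) := by
      intro m hm
      have e1 : ∑ m' ∈ S, b m m' * (b n m - b n m') * (u m * (starRingEnd ℂ) (u m'))
          = b n m * u m * (∑ m' ∈ S, b m m' * (starRingEnd ℂ) (u m'))
            - ∑ m' ∈ S, b m m' * b n m' * (u m * (starRingEnd ℂ) (u m')) := by
        rw [Finset.mul_sum, ← Finset.sum_sub_distrib]
        exact Finset.sum_congr rfl fun m' _ => by ring
      rw [e1, hSrow m hm]
    have hD2 : ∑ m ∈ S, ∑ m' ∈ S, b m m' * b n m' * (u m * (starRingEnd ℂ) (u m'))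
        = ∑ m' ∈ S, b n m' * (starRingEnd ℂ) (u m')
            * (-(Complex.I * μ) * u m' - b n m' * u n) := by
      rw [Finset.sum_comm]
      apply Finset.sum_congr rfl
      intro m' hm'
      have e2 : ∑ m ∈ S, b m m' * b n m' * (u m * (starRingEnd ℂ) (u m'))
          = b n m' * (starRingEnd ℂ) (u m') * ∑ m ∈ S, b m m' * u m := by
        rw [Finset.mul_sum]
        exact Finset.sum_congr rfl fun m _ => by ring
      rw [e2, hScol m' hm']
    calc ∑ m ∈ S, ∑ m' ∈ S, (b n m * u m) * (b n m' * (starRingEnd ℂ) (u m'))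
        = ∑ m ∈ S, ((b n m)^2 * (u m * (starRingEnd ℂ) (u m))
            + (b n m * u m * (-(Complex.I * μ) * (starRingEnd ℂ) (u m)
                + b n m * (starRingEnd ℂ) (u n))
              - ∑ m' ∈ S, b m m' * b n m' * (u m * (starRingEnd ℂ) (u m')))) := by
          refine Finset.sum_congr rfl fun m hm => ?_
          rw [hsplit m hm, hD m hm]
      _ = ∑ m ∈ S, ((b n m)^2 * (u m * (starRingEnd ℂ) (u m))
            + b n m * u m * (-(Complex.I * μ) * (starRingEnd ℂ) (u m)
                + b n m * (starRingEnd ℂ) (u n)))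
          - ∑ m ∈ S, ∑ m' ∈ S, b m m' * b n m' * (u m * (starRingEnd ℂ) (u m')) := by
          rw [← Finset.sum_sub_distrib]
          exact Finset.sum_congr rfl fun m _ => by ring
      _ = ∑ m ∈ S, ((b n m)^2 * (u m * (starRingEnd ℂ) (u m))
            + b n m * u m * (-(Complex.I * μ) * (starRingEnd ℂ) (u m)
                + b n m * (starRingEnd ℂ) (u n)))
          - ∑ m ∈ S, b n m * (starRingEnd ℂ) (u m)
              * (-(Complex.I * μ) * u m - b n m * u n) := by
          rw [hD2]
      _ = ∑ m ∈ S, (b n m)^2 *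
          (u m * (starRingEnd ℂ) (u m)
            + (u m * (starRingEnd ℂ) (u n) + (starRingEnd ℂ) (u m) * u n)) := by
          rw [← Finset.sum_sub_distrib]
          exact Finset.sum_congr rfl fun m _ => by ring
  -- pass to real parts via casting
  have cast1 : ((μ ^ 2 * ‖u n‖ ^ 2 : ℝ) : ℂ)
      = ((μ : ℂ))^2 * (u n * (starRingEnd ℂ) (u n)) := by
    rw [Complex.mul_conj]
    push_cast [Complex.sq_norm]
    ring
  have cast2 : ∀ m ∈ S, (((1 / (x m - x n)) ^ 2
        * (‖u m‖ ^ 2 + 2 * (u n * (starRingEnd ℂ) (u m)).re) : ℝ) : ℂ)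
      = (b n m)^2 * (u m * (starRingEnd ℂ) (u m)
          + (u m * (starRingEnd ℂ) (u n) + (starRingEnd ℂ) (u m) * u n)) := by
    intro m hm
    have hnm : n ≠ m := (Finset.ne_of_mem_erase hm).symm
    have hb2 : (b n m)^2 = (((1 / (x m - x n)) ^ 2 : ℝ) : ℂ) := by
      simp only [hb, if_neg hnm]
      push_cast
      rw [div_pow, div_pow, one_pow]
      congr 1
      ring
    have hz : u m * (starRingEnd ℂ) (u n) + (starRingEnd ℂ) (u m) * u n
        = ((2 * (u n * (starRingEnd ℂ) (u m)).re : ℝ) : ℂ) := by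
      rw [← Complex.add_conj (u n * (starRingEnd ℂ) (u m)), _root_.map_mul, Complex.conj_conj]
      ring
    rw [hb2, hz, Complex.mul_conj]
    push_cast [Complex.sq_norm]
    ring
  have final : ((μ ^ 2 * ‖u n‖ ^ 2 : ℝ) : ℂ)
      = ((∑ m ∈ S, (1 / (x m - x n)) ^ 2
          * (‖u m‖ ^ 2 + 2 * (u n * (starRingEnd ℂ) (u m)).re) : ℝ) : ℂ) := by
    rw [cast1, key, Complex.ofReal_sum]
    exact Finset.sum_congr rfl fun m hm => (cast2 m hm).symm
  exact_mod_cast final
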